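/- For every natural number N ≥ 1, as an identity of power series in q (|q|<1): ∑_{n=1}^{N} (-q;q)_n q^n/((q;q)_n (1-q^n)) − 2 ∑_{n=1}^{N} [N choose n] q^{n(n+3)/2} (-q;q)_{n-1}/((q;q)_n (1-q^n)) = ∑_{n=1}^{N} q^n/(1-q^n). -/

import Mathlib

open Finset

/-- q-Pochhammer symbol (a;q)_n = ∏_{k=0}^{n-1} (1 - a q^k). -/
noncomputable def qP (a q : ℂ) (n : ℕ) : ℂ := ∏ k ∈ Finset.range n, (1 - a * q ^ k)

/-- Gaussian (q-)binomial coefficient [N choose n]_q. -/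
noncomputable def qBinom (q : ℂ) (N n : ℕ) : ℂ := qP q q N / (qP q q n * qP q q (N - n))


lemma qP_zero (a q : ℂ) : qP a q 0 = 1 := by simp [qP]

lemma qP_succ (a q : ℂ) (n : ℕ) : qP a q (n+1) = qP a q n * (1 - a * q ^ n) :=
  Finset.prod_range_succ _ _

lemma norm_pow_lt {q : ℂ} (hq : ‖q‖ < 1) (k : ℕ) : ‖q * q ^ k‖ < 1 := by
  rw [norm_mul, norm_pow]
  calc ‖q‖ * ‖q‖ ^ k ≤ ‖q‖ * 1 :=
        mul_le_mul_of_nonneg_left (pow_le_one₀ (norm_nonneg q) hq.le) (norm_nonneg q)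
    _ < 1 := by simpa using hq

lemma sub_ne {q : ℂ} (hq : ‖q‖ < 1) (k : ℕ) : 1 - q * q ^ k ≠ 0 := by
  intro h
  have h1 : q * q ^ k = 1 := by linear_combination -h
  have := norm_pow_lt hq k
  rw [h1] at this; simp at this

lemma add_ne {q : ℂ} (hq : ‖q‖ < 1) (k : ℕ) : 1 + q * q ^ k ≠ 0 := by
  intro h
  have h1 : q * q ^ k = -1 := by linear_combination h
  have := norm_pow_lt hq k
  rw [h1] at this; simp at this

lemma qPq_ne {q : ℂ} (hq : ‖q‖ < 1) (n : ℕ) : qP q q n ≠ 0 := by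
  rw [qP, Finset.prod_ne_zero_iff]
  exact fun k _ => sub_ne hq k

lemma qPnq_ne {q : ℂ} (hq : ‖q‖ < 1) (n : ℕ) : qP (-q) q n ≠ 0 := by
  rw [qP, Finset.prod_ne_zero_iff]
  intro k _
  have := add_ne hq k
  intro h; apply this; linear_combination h

lemma sub_pow_ne {q : ℂ} (hq : ‖q‖ < 1) {k : ℕ} (hk : k ≠ 0) : 1 - q ^ k ≠ 0 := by
  obtain ⟨j, rfl⟩ := Nat.exists_eq_succ_of_ne_zero hk
  have := sub_ne hq j
  rw [pow_succ]; intro h; apply this; linear_combination h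

lemma exp1 (m : ℕ) : (m+1)*(m+4)/2 = m*(m+3)/2 + (m+2) := by
  have h : (m+1)*(m+4) = m*(m+3) + 2*(m+2) := by ring
  rw [h, Nat.add_mul_div_left _ _ (by norm_num : 0 < 2)]

lemma exp2 (m : ℕ) : (m+1)*(m+2)/2 = m*(m+1)/2 + (m+1) := by
  have h : (m+1)*(m+2) = m*(m+1) + 2*(m+1) := by ring
  rw [h, Nat.add_mul_div_left _ _ (by norm_num : 0 < 2)]

lemma exp3 (m : ℕ) : m*(m+3)/2 = m*(m+1)/2 + m := by
  have h : m*(m+3) = m*(m+1) + 2*m := by ring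
  rw [h, Nat.add_mul_div_left _ _ (by norm_num : 0 < 2)]

noncomputable def fS (q : ℂ) (N m : ℕ) : ℂ :=
  qBinom q N m * q ^ (m*(m+3)/2) * qP (-q) q m / (qP q q (m+1) * (1 - q ^ (m+1)))

noncomputable def gS (q : ℂ) (N m : ℕ) : ℂ :=
  -q^(N+1)/(1-q^(N+2))^2 * (qBinom q (N+1) m * q ^ (m*(m+1)/2) * qP (-q) q m / qP q q m)

set_option maxHeartbeats 2000000 in
lemma key1 {q : ℂ} (hq : ‖q‖ < 1) {m N : ℕ} (h : m ≤ N) :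
    fS q (N+1) m - (1-q^(N+1))*(1+q^(N+2))/(1-q^(N+2))^2 * fS q N m
      = gS q N (m+1) - gS q N m := by
  obtain ⟨d, rfl⟩ := Nat.exists_eq_add_of_le h
  unfold fS gS qBinom
  have e1 : m + d + 1 - m = d + 1 := by omega
  have e2 : m + d - m = d := by omega
  have e3 : m + d + 1 - (m + 1) = d := by omega
  rw [e1, e2, e3]
  rw [qP_succ q q (m+d), qP_succ q q d, qP_succ q q m, qP_succ (-q) q m]
  rw [show m+1+1 = m+2 from rfl, exp2 m, exp3 m]
  have hPm := qPq_ne hq m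
  have hPd := qPq_ne hq d
  have hPmd := qPq_ne hq (m+d)
  have hAm := qPnq_ne hq m
  have h1m := sub_ne hq m
  have h1d := sub_ne hq d
  have h1md := sub_ne hq (m+d)
  have h1md1 := sub_ne hq (m+d+1)
  have hN2 : (1 : ℂ) - q ^ (m+d+2) ≠ 0 := sub_pow_ne hq (by omega)
  have h1m' : (1 : ℂ) - q ^ (m+1) ≠ 0 := sub_pow_ne hq (by omega)
  have hN1 : (1 : ℂ) - q ^ (m+d+1) ≠ 0 := sub_pow_ne hq (by omega)
  simp only [pow_add, pow_succ, pow_zero, one_mul] at hN2 h1m' hN1 h1m h1d h1md h1md1 ⊢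
  set u := q ^ m with hu
  set v := q ^ d with hv
  set w := q ^ (m*(m+1)/2) with hw
  set Pm := qP q q m with hPm'
  set Pd := qP q q d with hPd'
  set Pmd := qP q q (m+d) with hPmd'
  set Am := qP (-q) q m with hAm'
  clear_value u v w Pm Pd Pmd Am
  clear hu hv hw hPm' hPd' hPmd' hAm' h e1 e2 e3 hq h1m' h1md h1md1 hN1
  rw [show (1:ℂ)-u*q = 1-q*u by ring]
  simp only [div_div, div_mul_eq_mul_div, mul_div_assoc', neg_div, ← neg_mul]
  have hA : Pm * (Pd * (1 - q * v)) * (Pm * (1 - q * u) * (1 - q * u)) ≠ 0 := by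
    apply_rules [mul_ne_zero]
  have hB : (1 - u * v * q * q) * (1 - u * v * q * q) * (Pm * Pd * (Pm * (1 - q * u) * (1 - q * u))) ≠ 0 := by
    apply_rules [mul_ne_zero]
  have hC : (1 - u * v * q * q) * (1 - u * v * q * q) * (Pm * (1 - q * u) * Pd * (Pm * (1 - q * u))) ≠ 0 := by
    apply_rules [mul_ne_zero]
  have hD : (1 - u * v * q * q) * (1 - u * v * q * q) * (Pm * (Pd * (1 - q * v)) * Pm) ≠ 0 := by
    apply_rules [mul_ne_zero]
  rw [div_sub_div _ _ hA hB, div_sub_div _ _ hC hD, div_eq_div_iff (mul_ne_zero hA hB) (mul_ne_zero hC hD)]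
  ring


lemma exp4 (N : ℕ) : (N+1)*(N+4)/2 = (N+1)*(N+2)/2 + (N+1) := by
  have h : (N+1)*(N+4) = (N+1)*(N+2) + 2*(N+1) := by ring
  rw [h, Nat.add_mul_div_left _ _ (by norm_num : 0 < 2)]

noncomputable def SS (q : ℂ) (N : ℕ) : ℂ := ∑ m ∈ Finset.range (N+1), fS q N m

lemma qBinom_self {q : ℂ} (hq : ‖q‖ < 1) (N : ℕ) : qBinom q N N = 1 := by
  unfold qBinom
  rw [Nat.sub_self, qP_zero, mul_one, div_self (qPq_ne hq N)]

lemma key2 {q : ℂ} (hq : ‖q‖ < 1) (N : ℕ) :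
    fS q (N+1) (N+1) = - gS q N (N+1) := by
  unfold fS gS
  rw [qBinom_self hq (N+1)]
  rw [show (N+1)*(N+1+3)/2 = (N+1)*(N+4)/2 from rfl,
      show (N+1)*(N+1+1)/2 = (N+1)*(N+2)/2 from rfl, exp4 N]
  rw [qP_succ q q (N+1)]
  have hP := qPq_ne hq (N+1)
  have hA := qPnq_ne hq (N+1)
  have h1 := sub_ne hq (N+1)
  have h2 : (1 : ℂ) - q ^ (N+2) ≠ 0 := sub_pow_ne hq (by omega)
  simp only [pow_add, pow_succ, pow_zero, one_mul] at h2 h1 ⊢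
  field_simp

lemma key3 {q : ℂ} (hq : ‖q‖ < 1) (N : ℕ) :
    gS q N 0 = -(q^(N+1)/(1-q^(N+2))^2) := by
  unfold gS qBinom
  rw [Nat.sub_zero, qP_zero, one_mul, div_self (qPq_ne hq (N+1)), qP_zero]
  norm_num
  ring

lemma Srec {q : ℂ} (hq : ‖q‖ < 1) (N : ℕ) :
    SS q (N+1) = (1-q^(N+1))*(1+q^(N+2))/(1-q^(N+2))^2 * SS q N + q^(N+1)/(1-q^(N+2))^2 := by
  have h1 : ∀ m ∈ Finset.range (N+1), fS q (N+1) m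
      = (1-q^(N+1))*(1+q^(N+2))/(1-q^(N+2))^2 * fS q N m + (gS q N (m+1) - gS q N m) := by
    intro m hm
    have := key1 hq (Nat.lt_succ_iff.mp (Finset.mem_range.mp hm))
    linear_combination this
  simp only [SS]
  rw [Finset.sum_range_succ _ (N+1)]
  rw [Finset.sum_congr rfl h1, Finset.sum_add_distrib, ← Finset.mul_sum,
      Finset.sum_range_sub (gS q N), key2 hq N, key3 hq N]
  ring

lemma Srec' {q : ℂ} (hq : ‖q‖ < 1) (N : ℕ) :
    (1-q^(N+2))^2 * SS q (N+1) = (1-q^(N+1))*(1+q^(N+2)) * SS q N + q^(N+1) := by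
  have h2 : (1 : ℂ) - q ^ (N+2) ≠ 0 := sub_pow_ne hq (by omega)
  rw [Srec hq N]
  field_simp

lemma Sval {q : ℂ} (hq : ‖q‖ < 1) (N : ℕ) :
    2*q*(1 - q^(N+1)) * SS q N * qP q q (N+1) = qP (-q) q (N+1) - qP q q (N+1) := by
  induction N with
  | zero =>
    unfold SS
    rw [Finset.sum_range_one]
    unfold fS
    rw [qBinom_self hq 0]
    simp only [qP_succ, qP_zero, pow_one, pow_zero, one_mul, mul_one]
    have h1 := sub_ne hq 0
    simp only [pow_zero, mul_one] at h1
    norm_num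
    field_simp
    ring
  | succ n ih =>
    have hr := Srec' hq n
    have h1 : (1 : ℂ) - q ^ (n+1) ≠ 0 := sub_pow_ne hq (by omega)
    have h2 : (1 : ℂ) - q ^ (n+2) ≠ 0 := sub_pow_ne hq (by omega)
    rw [qP_succ q q (n+1), qP_succ (-q) q (n+1)]
    have e : (1 : ℂ) - q * q ^ (n+1) = 1 - q^(n+2) := by rw [pow_succ]; ring
    have e2 : (1 : ℂ) - -q * q ^ (n+1) = 1 + q^(n+2) := by rw [pow_succ]; ring
    rw [e, e2]
    have hexp : (q : ℂ)^(n+1+1) = q^(n+2) := rfl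
    rw [hexp]
    linear_combination 2*q*(qP q q (n+1)) * hr + (1+q^(n+2)) * ih

noncomputable def cT (q : ℂ) (n : ℕ) : ℂ :=
  q ^ (n * (n + 3) / 2) * qP (-q) q (n - 1) / (qP q q n * (1 - q ^ n))

lemma pascal {q : ℂ} (hq : ‖q‖ < 1) (j d : ℕ) :
    qBinom q (1+j+d+1) (1+j) = qBinom q (1+j+d) (1+j) + q^(d+1) * qBinom q (1+j+d) j := by
  unfold qBinom
  rw [show 1+j+d+1-(1+j) = d+1 by omega, show 1+j+d-(1+j) = d by omega,
      show 1+j+d-j = d+1 by omega, show 1+j+d+1 = (1+j+d)+1 from rfl,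
      show 1+j+d = (j+d)+1 by omega, show 1+j = j+1 by omega]
  rw [qP_succ q q (j+d+1), qP_succ q q (j+d), qP_succ q q d, qP_succ q q j]
  have hPj := qPq_ne hq j
  have hPd := qPq_ne hq d
  have hPjd := qPq_ne hq (j+d)
  have h1j := sub_ne hq j
  have h1d := sub_ne hq d
  have h1jd := sub_ne hq (j+d)
  have h1jd1 := sub_ne hq (j+d+1)
  simp only [pow_add, pow_succ, pow_zero, one_mul] at h1jd1 ⊢
  field_simp
  ring

lemma key4 {q : ℂ} (hq : ‖q‖ < 1) {m N : ℕ} (h : m ≤ N) :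
    q^(N-m) * (qBinom q N m * cT q (m+1)) = q^(N+2) * fS q N m := by
  obtain ⟨d, rfl⟩ := Nat.exists_eq_add_of_le h
  unfold cT fS
  rw [Nat.add_sub_cancel, show m+d-m = d by omega,
      show (m+1)*(m+1+3)/2 = (m+1)*(m+4)/2 from rfl, exp1 m]
  simp only [pow_add, pow_succ, pow_zero, one_mul]
  ring

lemma deltaB {q : ℂ} (hq : ‖q‖ < 1) (N : ℕ) :
    ∑ n ∈ Finset.Icc 1 (N+1), qBinom q (N+1) n * cT q n
      = ∑ n ∈ Finset.Icc 1 N, qBinom q N n * cT q n + q^(N+2) * SS q N := by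
  rw [Finset.sum_Icc_succ_top (by omega : 1 ≤ N+1)]
  have hP : ∀ n ∈ Finset.Icc 1 N, qBinom q (N+1) n * cT q n
      = qBinom q N n * cT q n + q^(N+1-n) * qBinom q N (n-1) * cT q n := by
    intro n hn
    obtain ⟨h1, h2⟩ := Finset.mem_Icc.mp hn
    obtain ⟨j, rfl⟩ := Nat.exists_eq_add_of_le h1
    obtain ⟨d, rfl⟩ := Nat.exists_eq_add_of_le h2
    rw [show 1+j+d+1-(1+j) = d+1 by omega, show 1+j-1 = j by omega, pascal hq j d]
    ring
  rw [Finset.sum_congr rfl hP, Finset.sum_add_distrib]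
  have hre : ∑ n ∈ Finset.Icc 1 N, q^(N+1-n) * qBinom q N (n-1) * cT q n
      = ∑ i ∈ Finset.range N, q^(N+2) * fS q N i := by
    rw [← Finset.Ico_add_one_right_eq_Icc, Finset.sum_Ico_eq_sum_range]
    apply Finset.sum_congr (by norm_num)
    intro i hi
    have hiN : i ≤ N := (Finset.mem_range.mp hi).le
    rw [show N+1-(1+i) = N-i by omega, show 1+i-1 = i by omega, show (1:ℕ)+i = i+1 by omega,
        mul_assoc]
    exact key4 hq hiN
  have hc : cT q (N+1) = q^(N+2) * fS q N N := by
    have h := key4 hq (le_refl N)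
    rw [Nat.sub_self, pow_zero, one_mul, qBinom_self hq N, one_mul] at h
    exact h
  rw [hre, hc, qBinom_self hq (N+1), one_mul]
  simp only [SS]
  rw [Finset.sum_range_succ, ← Finset.mul_sum]
  ring

lemma main (N : ℕ) (hN : 1 ≤ N) (q : ℂ) (hq : ‖q‖ < 1) :
    ∑ n ∈ Finset.Icc 1 N, qP (-q) q n * q ^ n / (qP q q n * (1 - q ^ n)) -
        2 * ∑ n ∈ Finset.Icc 1 N, qBinom q N n * cT q n
      = ∑ n ∈ Finset.Icc 1 N, q ^ n / (1 - q ^ n) := by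
  induction N, hN using Nat.le_induction with
  | base =>
    simp only [Finset.Icc_self, Finset.sum_singleton]
    rw [qBinom_self hq 1, one_mul]
    unfold cT
    norm_num
    rw [qP_succ, qP_succ, qP_zero, qP_zero]
    have h1 := sub_ne hq 0
    simp only [pow_zero, mul_one, pow_one, one_mul] at h1 ⊢
    field_simp
    ring
  | succ n hn ih =>
    rw [Finset.sum_Icc_succ_top (by omega : 1 ≤ n+1), deltaB hq n,
        Finset.sum_Icc_succ_top (by omega : 1 ≤ n+1)]
    have hS := Sval hq n
    have key : qP (-q) q (n+1) * q^(n+1) / (qP q q (n+1) * (1 - q^(n+1))) - 2*(q^(n+2) * SS q n)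
        = q^(n+1)/(1-q^(n+1)) := by
      have hP := qPq_ne hq (n+1)
      have h1 : (1:ℂ) - q^(n+1) ≠ 0 := sub_pow_ne hq (by omega)
      field_simp
      linear_combination (-(q^(n+1))) * hS
    linear_combination ih + key

theorem stmt_14 (N : ℕ) (hN : 1 ≤ N) (q : ℂ) (hq : ‖q‖ < 1) :
    ∑ n ∈ Finset.Icc 1 N, qP (-q) q n * q ^ n / (qP q q n * (1 - q ^ n)) -
        2 * ∑ n ∈ Finset.Icc 1 N,
          qBinom q N n * (q ^ (n * (n + 3) / 2) * qP (-q) q (n - 1) / (qP q q n * (1 - q ^ n))) =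
      ∑ n ∈ Finset.Icc 1 N, q ^ n / (1 - q ^ n) := by
  have h := main N hN q hq
  simp only [cT] at h
  exact h
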